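/- Suppose C is an (N,v,t)-suitable core over {1,…,v} with v ≤ t+1. Let R be the set of symbols that start a row of C more than t+1−v times, and for each i ∈ {1,…,v} let B_i be the set of symbols j ≠ i such that no row of C starts with i immediately followed by j. Then B_i ⊆ R for every i ∈ {1,…,v}, and |B_i| ≥ 2v−t−2 for every i ∈ {1,…,v}∖R. -/

import Mathlib

/-- An `(N, w, t)`-suitable core: an `N × w` array whose rows are permutations of `{1,…,w}`
(row `i`, position `j` holds symbol `C i j`) such that for each `s` with `0 ≤ s ≤ t−1`,
each symbol precedes each set of `s` other symbols in at least `t − s` rows. -/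
def IsSuitableCore (N w t : ℕ) (C : Fin N → Equiv.Perm (Fin w)) : Prop :=
  ∀ (σ : Fin w) (T : Finset (Fin w)), σ ∉ T → T.card < t →
    t - T.card ≤ (Finset.univ.filter fun i : Fin N =>
      ∀ τ ∈ T, (C i).symm σ < (C i).symm τ).card

def SuitableCoreExists (N w t : ℕ) : Prop :=
  ∃ C : Fin N → Equiv.Perm (Fin w), IsSuitableCore N w t C

/-- In an `(N,v,t)`-suitable core with `v ≤ t+1`: if `R` is the set of symbols starting
more than `t+1−v` rows and `B i` is the set of symbols `j ≠ i` such that no row starts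
with `i` immediately followed by `j`, then `B i ⊆ R` for all `i`, and
`|B i| ≥ 2v−t−2` for all `i ∉ R`. -/
theorem stmt6 (N v t : ℕ) (C : Fin N → Equiv.Perm (Fin v)) (hvt : v ≤ t + 1)
    (hC : IsSuitableCore N v t C)
    (R : Finset (Fin v))
    (hR : R = Finset.univ.filter fun k : Fin v =>
      t + 1 - v < (Finset.univ.filter fun i : Fin N => ((C i).symm k).val = 0).card)
    (B : Fin v → Finset (Fin v))
    (hB : ∀ i : Fin v, B i = Finset.univ.filter fun j : Fin v =>
      j ≠ i ∧ ¬ ∃ row : Fin N, ((C row).symm i).val = 0 ∧ ((C row).symm j).val = 1) :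
    (∀ i : Fin v, B i ⊆ R) ∧
    (∀ i : Fin v, i ∉ R → 2 * (v : ℤ) - t - 2 ≤ ((B i).card : ℤ)) := by
  constructor
  · -- B i ⊆ R
    intro i j hj
    rw [hB] at hj
    simp only [Finset.mem_filter, Finset.mem_univ, true_and] at hj
    obtain ⟨hji, hno⟩ := hj
    rw [hR]
    simp only [Finset.mem_filter, Finset.mem_univ, true_and]
    have hv2 : 2 ≤ v := by
      have := Fintype.one_lt_card_iff.mpr ⟨j, i, hji⟩
      exact (by simpa using this : 1 < v)
    set T : Finset (Fin v) := (Finset.univ.erase i).erase j with hT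
    have hjT : j ∉ T := Finset.notMem_erase _ _
    have hjmem : j ∈ Finset.univ.erase i := by simp [hji]
    have hTcard : T.card = v - 2 := by
      rw [hT, Finset.card_erase_of_mem hjmem, Finset.card_erase_of_mem (by simp)]
      simp
      omega
    have hTlt : T.card < t := by omega
    have hkey := hC j T hjT hTlt
    have hsub : (Finset.univ.filter fun r : Fin N =>
        ∀ τ ∈ T, (C r).symm j < (C r).symm τ) ⊆
        (Finset.univ.filter fun r : Fin N => ((C r).symm j).val = 0) := by
      intro r hr
      simp only [Finset.mem_filter, Finset.mem_univ, true_and] at hr ⊢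
      by_contra h0
      -- the symbol at position 0 must be i
      have hσ0 : (C r) ⟨0, by omega⟩ = i := by
        set σ0 := (C r) ⟨0, by omega⟩ with hσ0def
        have hsymm : (C r).symm σ0 = ⟨0, by omega⟩ := Equiv.symm_apply_apply _ _
        have hnotT : σ0 ∉ T := by
          intro hmem
          have := hr σ0 hmem
          rw [hsymm] at this
          exact absurd this (by simp [Fin.lt_def])
        simp only [hT, Finset.mem_erase, Finset.mem_univ, and_true, not_and, not_not] at hnotT
        rcases eq_or_ne σ0 j with h | h
        · exfalso; apply h0; rw [← h, hsymm]
        · exact hnotT h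
      have hi0 : ((C r).symm i).val = 0 := by
        rw [← hσ0, Equiv.symm_apply_apply]
      -- now (C r).symm j ≥ 1, consider whether it is 1 or ≥ 2
      rcases eq_or_ne ((C r).symm j).val 1 with h1 | h1
      · exact hno ⟨r, hi0, h1⟩
      · -- symm j ≥ 2; symbol at position 1 must be in T, contradiction
        set σ1 := (C r) ⟨1, by omega⟩ with hσ1def
        have hsymm1 : (C r).symm σ1 = ⟨1, by omega⟩ := Equiv.symm_apply_apply _ _
        have hσ1i : σ1 ≠ i := by
          intro h
          rw [h] at hsymm1
          rw [hsymm1] at hi0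
          simp at hi0
        have hσ1j : σ1 ≠ j := by
          intro h
          rw [h] at hsymm1
          rw [hsymm1] at h1
          simp at h1
        have hmem : σ1 ∈ T := by
          simp [hT, Finset.mem_erase, hσ1i, hσ1j]
        have := hr σ1 hmem
        rw [hsymm1] at this
        rw [Fin.lt_def] at this
        simp only at this
        omega
    have hle := Finset.card_le_card hsub
    omega
  · -- cardinality bound
    intro i hiR
    rw [hR] at hiR
    simp only [Finset.mem_filter, Finset.mem_univ, true_and, not_lt] at hiR
    have hv1 : 1 ≤ v := i.pos
    set P : Fin v → Prop := fun j =>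
      ∃ row : Fin N, ((C row).symm i).val = 0 ∧ ((C row).symm j).val = 1 with hP
    classical
    set S : Finset (Fin v) := Finset.univ.filter (fun j => j ≠ i ∧ P j) with hS
    -- B i and S partition univ \ {i}
    have hsum : (B i).card + S.card = v - 1 := by
      have h1 : (B i) = (Finset.univ.filter (· ≠ i)).filter (fun j => ¬ P j) := by
        rw [hB i, Finset.filter_filter]
      have h2 : S = (Finset.univ.filter (· ≠ i)).filter (fun j => P j) := by
        rw [hS, Finset.filter_filter]
      have h3 : (Finset.univ.filter (· ≠ i)).card = v - 1 := by
        rw [Finset.filter_ne', Finset.card_erase_of_mem (Finset.mem_univ i)]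
        simp
      rw [h1, h2, add_comm]
      rw [Finset.card_filter_add_card_filter_not] at *
      · exact h3
    -- inject S into rows starting with i
    have hv2' : ∀ j ∈ S, (1:ℕ) < v := by
      intro j hj
      rw [hS] at hj
      simp only [Finset.mem_filter, Finset.mem_univ, true_and] at hj
      have := Fintype.one_lt_card_iff.mpr ⟨j, i, hj.1⟩
      simpa using this
    have hScard : S.card ≤ (Finset.univ.filter fun r : Fin N => ((C r).symm i).val = 0).card := by
      rcases S.eq_empty_or_nonempty with hSe | ⟨j0, hj0⟩
      · simp [hSe]
      have hv2 : (1:ℕ) < v := hv2' j0 hj0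
      set g : Fin N → Fin v := fun r => (C r) ⟨1, hv2⟩ with hg
      have hsub : S ⊆ (Finset.univ.filter fun r : Fin N => ((C r).symm i).val = 0).image g := by
        intro j hj
        have hjS := hj
        rw [hS] at hj
        simp only [Finset.mem_filter, Finset.mem_univ, true_and] at hj
        obtain ⟨hji, row, hi0, hj1⟩ := hj
        rw [Finset.mem_image]
        refine ⟨row, by simp [hi0], ?_⟩
        have : (C row).symm j = ⟨1, hv2⟩ := by
          apply Fin.ext
          exact hj1
        rw [hg]
        simp only
        rw [← this, Equiv.apply_symm_apply]
      calc S.card ≤ _ := Finset.card_le_card hsub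
        _ ≤ _ := Finset.card_image_le
    omega
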